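/- Independence introduction / quantifier swap (rule 7): ∀x ∃y (φ ∧ x ⊥_z y) is logically equivalent to ∃y ∀x φ, where z is a tuple listing all the variables in Fr(φ) \ {x, y}. -/

import Mathlib

open FirstOrder Language

/-- Formulas of independence logic over a first-order language `L`, with variables `ℕ`:
first-order formulas, conditional independence atoms `t1 ⊥_{t3} t2` (written
`indep t1 t2 t3`) between tuples (lists) of terms, conjunction, disjunction, and
existential and universal quantification. -/
inductive TeamFormula (L : Language) : Type _ where
  | fo (φ : L.Formula ℕ)
  | indep (t1 t2 t3 : List (L.Term ℕ))
  | and (φ ψ : TeamFormula L)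
  | or (φ ψ : TeamFormula L)
  | ex (x : ℕ) (φ : TeamFormula L)
  | all (x : ℕ) (φ : TeamFormula L)

namespace TeamFormula

variable {L : Language}

/-- The set of free variables of an independence-logic formula. -/
def Fr : TeamFormula L → Set ℕ
  | .fo φ => ↑φ.freeVarFinset
  | .indep t1 t2 t3 => ↑((t1 ++ t2 ++ t3).foldr (fun t s => t.varFinset ∪ s) ∅)
  | .and φ ψ => φ.Fr ∪ ψ.Fr
  | .or φ ψ => φ.Fr ∪ ψ.Fr
  | .ex x φ => φ.Fr \ {x}
  | .all x φ => φ.Fr \ {x}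

/-- A team is a set of assignments. -/
abbrev Team (M : Type*) := Set (ℕ → M)

/-- The value of a tuple (list) of terms under an assignment. -/
def listVal {M : Type*} [L.Structure M] (ts : List (L.Term ℕ)) (s : ℕ → M) : List M :=
  ts.map fun t => t.realize s

/-- Lax team semantics for independence logic.  First-order formulas are evaluated
pointwise; disjunction splits the team into a union; `∃x φ` is witnessed by a function
`F` from the team to nonempty sets of elements, extending the team to
`X(F/x) = {s(a/x) : s ∈ X, a ∈ F s}`; `∀x φ` duplicates the team to `X(M/x)`. -/
def Sat (M : Type*) [L.Structure M] : TeamFormula L → Team M → Prop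
  | .fo φ, X => ∀ s ∈ X, φ.Realize s
  | .indep t1 t2 t3, X => ∀ s ∈ X, ∀ s' ∈ X, listVal t3 s = listVal t3 s' →
      ∃ s'' ∈ X, listVal t1 s'' = listVal t1 s ∧ listVal t3 s'' = listVal t3 s ∧
        listVal t2 s'' = listVal t2 s'
  | .and φ ψ, X => φ.Sat M X ∧ ψ.Sat M X
  | .or φ ψ, X => ∃ Y Z : Team M, Y ∪ Z = X ∧ φ.Sat M Y ∧ ψ.Sat M Z
  | .ex x φ, X => ∃ F : (ℕ → M) → Set M, (∀ s ∈ X, (F s).Nonempty) ∧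
      φ.Sat M {s' | ∃ s ∈ X, ∃ a ∈ F s, s' = Function.update s x a}
  | .all x φ, X => φ.Sat M {s' | ∃ s ∈ X, ∃ a : M, s' = Function.update s x a}

end TeamFormula

open FirstOrder Language

namespace TeamFormula

section Aux

variable {L : Language} {M : Type*} [L.Structure M]

lemma term_realize_congr' {t : L.Term ℕ} {v w : ℕ → M}
    (h : ∀ a ∈ t.varFinset, v a = w a) : t.realize v = t.realize w := by
  induction t with
  | var a => exact h a (by simp [Term.varFinset])
  | func f ts ih =>
    simp only [Term.realize]
    congr 1
    funext i
    exact ih i fun a ha => h a (by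
      simp only [Term.varFinset, Finset.mem_biUnion, Finset.mem_univ]
      exact ⟨i, trivial, ha⟩)

lemma formula_realize_congr' {φ : L.Formula ℕ} {v w : ℕ → M}
    (h : ∀ a ∈ φ.freeVarFinset, v a = w a) : φ.Realize v ↔ φ.Realize w := by
  have hs : ↑φ.freeVarFinset ⊆ (↑φ.freeVarFinset : Set ℕ) := subset_rfl
  have h1 := BoundedFormula.realize_restrictFreeVar' (M := M) hs (v := v) (xs := default)
  have h2 := BoundedFormula.realize_restrictFreeVar' (M := M) hs (v := w) (xs := default)
  have hvw : (v ∘ (↑) : (↑φ.freeVarFinset : Set ℕ) → M) = w ∘ (↑) :=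
    funext fun a => h a a.2
  show BoundedFormula.Realize φ v default ↔ BoundedFormula.Realize φ w default
  rw [← h1, ← h2, hvw]

lemma listVal_congr' {ts : List (L.Term ℕ)} {v w : ℕ → M}
    (h : ∀ t ∈ ts, ∀ a ∈ Term.varFinset t, v a = w a) : listVal ts v = listVal ts w :=
  List.map_congr_left fun t ht => term_realize_congr' (h t ht)

lemma varFinset_subset_foldr {l : List (L.Term ℕ)} {t : L.Term ℕ} (ht : t ∈ l) :
    (↑t.varFinset : Set ℕ) ⊆ ↑(l.foldr (fun t s => t.varFinset ∪ s) ∅) := by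
  induction l with
  | nil => cases ht
  | cons hd tl ih =>
    intro a ha
    rcases List.mem_cons.1 ht with rfl | h
    · simp only [List.foldr_cons, Finset.coe_union]
      exact Set.mem_union_left _ ha
    · simp only [List.foldr_cons, Finset.coe_union]
      exact Set.mem_union_right _ (ih h ha)

/-- Two teams are equivalent over a set `V` of variables if every assignment of one
has a counterpart in the other agreeing on `V`. -/
def EquivOn (V : Set ℕ) (X Y : Team M) : Prop :=
  (∀ s ∈ X, ∃ t ∈ Y, ∀ v ∈ V, s v = t v) ∧ (∀ t ∈ Y, ∃ s ∈ X, ∀ v ∈ V, t v = s v)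

lemma EquivOn.symm' {V : Set ℕ} {X Y : Team M} (h : EquivOn V X Y) : EquivOn V Y X :=
  ⟨h.2, fun s hs => by
    obtain ⟨t, ht, he⟩ := h.1 s hs
    exact ⟨t, ht, he⟩⟩

/-- Locality: satisfaction only depends on the values of the team on a superset of the
free variables. -/
lemma sat_local {φ : TeamFormula L} : ∀ {V : Set ℕ}, φ.Fr ⊆ V →
    ∀ {X Y : Team M}, EquivOn V X Y → φ.Sat M X → φ.Sat M Y := by
  induction φ with
  | fo ψ =>
    intro V hV X Y hXY hX t ht
    obtain ⟨s, hs, he⟩ := hXY.2 t ht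
    exact (formula_realize_congr' fun a ha => he a (hV (Finset.mem_coe.2 ha))).mpr (hX s hs)
  | indep t1 t2 t3 =>
    intro V hV X Y hXY hX s hs s' hs' h3
    have hsub : ∀ t ∈ t1 ++ t2 ++ t3, ∀ a ∈ Term.varFinset t, a ∈ V :=
      fun t ht a ha => hV (varFinset_subset_foldr ht (Finset.mem_coe.2 ha))
    obtain ⟨u, hu, heu⟩ := hXY.2 s hs
    obtain ⟨u', hu', heu'⟩ := hXY.2 s' hs'
    have e1s : listVal t1 s = listVal t1 u :=
      listVal_congr' fun t ht a ha => heu a (hsub t (by simp [ht]) a ha)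
    have e3s : listVal t3 s = listVal t3 u :=
      listVal_congr' fun t ht a ha => heu a (hsub t (by simp [ht]) a ha)
    have e2s' : listVal t2 s' = listVal t2 u' :=
      listVal_congr' fun t ht a ha => heu' a (hsub t (by simp [ht]) a ha)
    have e3s' : listVal t3 s' = listVal t3 u' :=
      listVal_congr' fun t ht a ha => heu' a (hsub t (by simp [ht]) a ha)
    obtain ⟨w, hw, w1, w3, w2⟩ := hX u hu u' hu' (e3s.symm.trans (h3.trans e3s'))
    obtain ⟨t'', ht'', he''⟩ := hXY.1 w hw
    have f1 : listVal t1 w = listVal t1 t'' :=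
      listVal_congr' fun t ht a ha => he'' a (hsub t (by simp [ht]) a ha)
    have f2 : listVal t2 w = listVal t2 t'' :=
      listVal_congr' fun t ht a ha => he'' a (hsub t (by simp [ht]) a ha)
    have f3 : listVal t3 w = listVal t3 t'' :=
      listVal_congr' fun t ht a ha => he'' a (hsub t (by simp [ht]) a ha)
    exact ⟨t'', ht'', f1.symm.trans (w1.trans e1s.symm), f3.symm.trans (w3.trans e3s.symm),
      f2.symm.trans (w2.trans e2s'.symm)⟩
  | and φ ψ ihφ ihψ =>
    intro V hV X Y hXY hX
    exact ⟨ihφ (fun a ha => hV (Or.inl ha)) hXY hX.1, ihψ (fun a ha => hV (Or.inr ha)) hXY hX.2⟩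
  | or φ ψ ihφ ihψ =>
    intro V hV X Y hXY hX
    obtain ⟨X1, X2, hun, h1, h2⟩ := hX
    refine ⟨{t ∈ Y | ∃ s ∈ X1, ∀ v ∈ V, s v = t v},
      {t ∈ Y | ∃ s ∈ X2, ∀ v ∈ V, s v = t v}, ?_, ?_, ?_⟩
    · apply Set.Subset.antisymm
      · exact Set.union_subset (Set.sep_subset _ _) (Set.sep_subset _ _)
      · intro t ht
        obtain ⟨s, hs, he⟩ := hXY.2 t ht
        rw [← hun] at hs
        rcases hs with hs | hs
        · exact Or.inl ⟨ht, s, hs, fun v hv => (he v hv).symm⟩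
        · exact Or.inr ⟨ht, s, hs, fun v hv => (he v hv).symm⟩
    · refine ihφ (fun a ha => hV (Or.inl ha)) ⟨?_, ?_⟩ h1
      · intro s hs
        obtain ⟨t, ht, he⟩ := hXY.1 s (by rw [← hun]; exact Or.inl hs)
        exact ⟨t, ⟨ht, s, hs, he⟩, he⟩
      · rintro t ⟨ht, s, hs, he⟩
        exact ⟨s, hs, fun v hv => (he v hv).symm⟩
    · refine ihψ (fun a ha => hV (Or.inr ha)) ⟨?_, ?_⟩ h2
      · intro s hs
        obtain ⟨t, ht, he⟩ := hXY.1 s (by rw [← hun]; exact Or.inr hs)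
        exact ⟨t, ⟨ht, s, hs, he⟩, he⟩
      · rintro t ⟨ht, s, hs, he⟩
        exact ⟨s, hs, fun v hv => (he v hv).symm⟩
  | ex w φ ih =>
    intro V hV X Y hXY hX
    obtain ⟨F, hF, hsat⟩ := hX
    have hV' : φ.Fr ⊆ V ∪ {w} := by
      intro a ha
      by_cases haw : a = w
      · exact Or.inr haw
      · exact Or.inl (hV ⟨ha, haw⟩)
    refine ⟨fun t => {a | ∃ s ∈ X, (∀ v ∈ V, s v = t v) ∧ a ∈ F s}, ?_, ?_⟩
    · intro t ht
      obtain ⟨s, hs, he⟩ := hXY.2 t ht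
      obtain ⟨a, haF⟩ := hF s hs
      exact ⟨a, s, hs, fun v hv => (he v hv).symm, haF⟩
    · refine ih hV' ⟨?_, ?_⟩ hsat
      · rintro u ⟨s, hs, a, haF, rfl⟩
        obtain ⟨t, ht, he⟩ := hXY.1 s hs
        refine ⟨Function.update t w a, ⟨t, ht, a, ⟨s, hs, fun v hv => he v hv, haF⟩, rfl⟩,
          ?_⟩
        intro v hv
        rcases hv with hv | hv
        · by_cases hvw : v = w
          · subst hvw; simp
          · rw [Function.update_of_ne hvw, Function.update_of_ne hvw]; exact he v hv
        · rw [Set.mem_singleton_iff] at hv; subst hv; simp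
      · rintro u ⟨t, ht, a, ⟨s, hs, hes, haF⟩, rfl⟩
        refine ⟨Function.update s w a, ⟨s, hs, a, haF, rfl⟩, ?_⟩
        intro v hv
        rcases hv with hv | hv
        · by_cases hvw : v = w
          · subst hvw; simp
          · rw [Function.update_of_ne hvw, Function.update_of_ne hvw]
            exact (hes v hv).symm
        · rw [Set.mem_singleton_iff] at hv; subst hv; simp
  | all w φ ih =>
    intro V hV X Y hXY hX
    have hV' : φ.Fr ⊆ V ∪ {w} := by
      intro a ha
      by_cases haw : a = w
      · exact Or.inr haw
      · exact Or.inl (hV ⟨ha, haw⟩)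
    refine ih hV' ⟨?_, ?_⟩ hX
    · rintro u ⟨s, hs, a, rfl⟩
      obtain ⟨t, ht, he⟩ := hXY.1 s hs
      refine ⟨Function.update t w a, ⟨t, ht, a, rfl⟩, ?_⟩
      intro v hv
      rcases hv with hv | hv
      · by_cases hvw : v = w
        · subst hvw; simp
        · rw [Function.update_of_ne hvw, Function.update_of_ne hvw]; exact he v hv
      · rw [Set.mem_singleton_iff] at hv; subst hv; simp
    · rintro u ⟨t, ht, a, rfl⟩
      obtain ⟨s, hs, he⟩ := hXY.2 t ht
      refine ⟨Function.update s w a, ⟨s, hs, a, rfl⟩, ?_⟩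
      intro v hv
      rcases hv with hv | hv
      · by_cases hvw : v = w
        · subst hvw; simp
        · rw [Function.update_of_ne hvw, Function.update_of_ne hvw]
          exact he v hv
      · rw [Set.mem_singleton_iff] at hv; subst hv; simp

/-- The empty team satisfies every formula (lax semantics). -/
lemma sat_empty (φ : TeamFormula L) : φ.Sat M (∅ : Team M) := by
  induction φ with
  | fo ψ => intro s hs; exact absurd hs (Set.notMem_empty s)
  | indep t1 t2 t3 => intro s hs; exact absurd hs (Set.notMem_empty s)
  | and _ _ ih1 ih2 => exact ⟨ih1, ih2⟩
  | or _ _ ih1 ih2 => exact ⟨∅, ∅, by simp, ih1, ih2⟩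
  | ex w φ ih =>
    refine ⟨fun _ => ∅, fun s hs => absurd hs (Set.notMem_empty s), ?_⟩
    have he : {s' | ∃ s ∈ (∅ : Team M), ∃ a ∈ (∅ : Set M), s' = Function.update s w a} =
        (∅ : Team M) := by ext u; simp
    rw [he]; exact ih
  | all w φ ih =>
    show φ.Sat M {s' | ∃ s ∈ (∅ : Team M), ∃ a : M, s' = Function.update s w a}
    have he : {s' | ∃ s ∈ (∅ : Team M), ∃ a : M, s' = Function.update s w a} = (∅ : Team M) := by
      ext u; simp
    rw [he]; exact ih

lemma listVal_single_var (x : ℕ) (s : ℕ → M) :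
    listVal [(Term.var x : L.Term ℕ)] s = [s x] := by
  simp [listVal]

lemma listVal_map_var (z : List ℕ) (s : ℕ → M) :
    listVal (z.map Term.var : List (L.Term ℕ)) s = z.map s := by
  simp [listVal, List.map_map, Function.comp_def]

end Aux

end TeamFormula

/-- independence introduction / quantifier swap (rule 7):
`∀x ∃y (φ ∧ x ⊥_z y)` is logically equivalent to `∃y ∀x φ`, where `z` is a tuple
listing all the variables in `Fr(φ) \ {x, y}`. -/
theorem TeamFormula.indep_introduction {L : Language} {M : Type*} [L.Structure M]
    (φ : TeamFormula L) (x y : ℕ) (z : List ℕ) (hxy : x ≠ y)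
    (hz : (↑z.toFinset : Set ℕ) = φ.Fr \ {x, y}) :
    ∀ X : TeamFormula.Team M,
      (TeamFormula.all x (TeamFormula.ex y (φ.and
          (TeamFormula.indep [Term.var x] [Term.var y] (z.map Term.var))))).Sat M X ↔
      (TeamFormula.ex y (TeamFormula.all x φ)).Sat M X := by
  intro X
  have hxz : ∀ v ∈ z, v ≠ x := by
    intro v hv hvx
    have hmem : v ∈ (↑z.toFinset : Set ℕ) := Finset.mem_coe.2 (List.mem_toFinset.2 hv)
    rw [hz] at hmem
    exact hmem.2 (Or.inl hvx)
  have hyz : ∀ v ∈ z, v ≠ y := by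
    intro v hv hvy
    have hmem : v ∈ (↑z.toFinset : Set ℕ) := Finset.mem_coe.2 (List.mem_toFinset.2 hv)
    rw [hz] at hmem
    exact hmem.2 (Or.inr hvy)
  have hFr : φ.Fr ⊆ (↑z.toFinset : Set ℕ) ∪ {x, y} := by
    intro a ha
    by_cases hax : a = x
    · exact Or.inr (Or.inl hax)
    by_cases hay : a = y
    · exact Or.inr (Or.inr hay)
    · refine Or.inl ?_
      rw [hz]
      refine ⟨ha, fun h => ?_⟩
      rcases h with h | h
      · exact hax h
      · exact hay (Set.mem_singleton_iff.1 h)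
  -- helpers for computing values of doubly-updated assignments
  have updx : ∀ (s : ℕ → M) (a b : M),
      Function.update (Function.update s x a) y b x = a := fun s a b => by
    rw [Function.update_of_ne hxy, Function.update_self]
  have updy : ∀ (s : ℕ → M) (a b : M),
      Function.update (Function.update s x a) y b y = b := fun s a b => by
    rw [Function.update_self]
  have updz : ∀ (s : ℕ → M) (a b : M), ∀ v ∈ z,
      Function.update (Function.update s x a) y b v = s v := fun s a b v hv => by
    rw [Function.update_of_ne (hyz v hv), Function.update_of_ne (hxz v hv)]
  have updcomm : ∀ (s : ℕ → M) (a b : M),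
      Function.update (Function.update s y b) x a =
        Function.update (Function.update s x a) y b := fun s a b =>
    Function.update_comm (Ne.symm hxy) b a s
  have agree : ∀ f g : ℕ → M, (∀ v ∈ z, f v = g v) → f x = g x → f y = g y →
      ∀ v ∈ (↑z.toFinset : Set ℕ) ∪ {x, y}, f v = g v := by
    intro f g hzfg hfx hfy v hv
    rcases hv with hv | hv
    · exact hzfg v (List.mem_toFinset.1 hv)
    · rcases hv with rfl | hv
      · exact hfx
      · rw [Set.mem_singleton_iff] at hv; subst hv; exact hfy
  have lvz_iff : ∀ f g : ℕ → M,
      listVal (z.map Term.var : List (L.Term ℕ)) f =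
          listVal (z.map Term.var : List (L.Term ℕ)) g ↔
        ∀ v ∈ z, f v = g v := by
    intro f g
    rw [listVal_map_var, listVal_map_var]
    exact List.map_inj_left
  rcases X.eq_empty_or_nonempty with rfl | ⟨s0, hs0⟩
  · constructor <;> intro _ <;> exact sat_empty _
  constructor
  · -- forward direction
    rintro ⟨G, hG, hφW, hindW⟩
    refine ⟨fun s => G (Function.update s x (s0 x)), ?_, ?_⟩
    · intro s hs
      exact hG _ ⟨s, hs, s0 x, rfl⟩
    · -- φ satisfied on the new team
      refine sat_local hFr ⟨?_, ?_⟩ hφW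
      · -- W → U
        rintro w ⟨r, ⟨s, hs, a', rfl⟩, b', hb', rfl⟩
        have hw : Function.update (Function.update s x a') y b' ∈
            {s' | ∃ r ∈ {s' | ∃ s ∈ X, ∃ a : M, s' = Function.update s x a},
              ∃ b ∈ G r, s' = Function.update r y b} := ⟨_, ⟨s, hs, a', rfl⟩, b', hb', rfl⟩
        obtain ⟨b0, hb0⟩ := hG (Function.update s x (s0 x)) ⟨s, hs, s0 x, rfl⟩
        have hw0 : Function.update (Function.update s x (s0 x)) y b0 ∈
            {s' | ∃ r ∈ {s' | ∃ s ∈ X, ∃ a : M, s' = Function.update s x a},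
              ∃ b ∈ G r, s' = Function.update r y b} := ⟨_, ⟨s, hs, s0 x, rfl⟩, b0, hb0, rfl⟩
        have hzz : listVal (z.map Term.var : List (L.Term ℕ))
            (Function.update (Function.update s x (s0 x)) y b0) =
            listVal (z.map Term.var) (Function.update (Function.update s x a') y b') :=
          (lvz_iff _ _).2 fun v hv => by rw [updz, updz] <;> try exact hv
        obtain ⟨s'', hs''W, h1, h3, h2⟩ := hindW _ hw0 _ hw hzz
        obtain ⟨r'', ⟨t, ht, c, rfl⟩, d, hd, rfl⟩ := hs''W
        rw [listVal_single_var, listVal_single_var, updx, updx] at h1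
        have hc : c = s0 x := List.singleton_injective h1
        rw [listVal_single_var, listVal_single_var, updy, updy] at h2
        have hdb : d = b' := List.singleton_injective h2
        have htz : ∀ v ∈ z, t v = s v := by
          intro v hv
          have := (lvz_iff _ _).1 h3 v hv
          rwa [updz _ _ _ _ hv, updz _ _ _ _ hv] at this
        subst hc; subst hdb
        refine ⟨Function.update (Function.update t y d) x a',
          ⟨Function.update t y d, ⟨t, ht, d, ?_, rfl⟩, a', rfl⟩, ?_⟩
        · -- d ∈ G (Function.update t x (s0 x))
          exact hd
        · rw [updcomm]
          refine agree _ _ ?_ ?_ ?_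
          · intro v hv; rw [updz _ _ _ _ hv, updz _ _ _ _ hv, htz v hv]
          · rw [updx, updx]
          · rw [updy, updy]
      · -- U → W
        rintro u ⟨s', ⟨s, hs, b, hb, rfl⟩, a, rfl⟩
        rw [updcomm]
        have hw1 : Function.update (Function.update s x (s0 x)) y b ∈
            {s' | ∃ r ∈ {s' | ∃ s ∈ X, ∃ a : M, s' = Function.update s x a},
              ∃ b ∈ G r, s' = Function.update r y b} := ⟨_, ⟨s, hs, s0 x, rfl⟩, b, hb, rfl⟩
        obtain ⟨b2, hb2⟩ := hG (Function.update s x a) ⟨s, hs, a, rfl⟩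
        have hw2 : Function.update (Function.update s x a) y b2 ∈
            {s' | ∃ r ∈ {s' | ∃ s ∈ X, ∃ a : M, s' = Function.update s x a},
              ∃ b ∈ G r, s' = Function.update r y b} := ⟨_, ⟨s, hs, a, rfl⟩, b2, hb2, rfl⟩
        have hzz : listVal (z.map Term.var : List (L.Term ℕ))
            (Function.update (Function.update s x a) y b2) =
            listVal (z.map Term.var) (Function.update (Function.update s x (s0 x)) y b) :=
          (lvz_iff _ _).2 fun v hv => by rw [updz _ _ _ _ hv, updz _ _ _ _ hv]
        obtain ⟨s'', hs''W, h1, h3, h2⟩ := hindW _ hw2 _ hw1 hzz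
        refine ⟨s'', hs''W, ?_⟩
        rw [listVal_single_var, listVal_single_var, updx] at h1
        have hx'' : s'' x = a := List.singleton_injective h1
        rw [listVal_single_var, listVal_single_var, updy] at h2
        have hy'' : s'' y = b := List.singleton_injective h2
        refine agree _ _ ?_ ?_ ?_
        · intro v hv
          have := (lvz_iff _ _).1 h3 v hv
          rw [updz _ _ _ _ hv] at this
          rw [updz _ _ _ _ hv, ← this]
        · rw [updx, hx'']
        · rw [updy, hy'']
  · -- backward direction
    rintro ⟨F, hF, hφU⟩
    refine ⟨fun r => {b | ∃ t ∈ X, (∀ v ∈ z, t v = r v) ∧ b ∈ F t}, ?_, ?_, ?_⟩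
    · rintro r ⟨s, hs, a, rfl⟩
      obtain ⟨b, hb⟩ := hF s hs
      exact ⟨b, s, hs, fun v hv => (Function.update_of_ne (hxz v hv) _ _).symm, hb⟩
    · -- φ satisfied on Z
      refine sat_local hFr ⟨?_, ?_⟩ hφU
      · -- U → Z
        rintro u ⟨s', ⟨s, hs, b, hb, rfl⟩, a, rfl⟩
        refine ⟨Function.update (Function.update s y b) x a,
          ⟨Function.update s x a, ⟨s, hs, a, rfl⟩, b,
            ⟨s, hs, fun v hv => (Function.update_of_ne (hxz v hv) _ _).symm, hb⟩, ?_⟩,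
          fun v _ => rfl⟩
        rw [updcomm]
      · -- Z → U
        rintro w ⟨r, ⟨s, hs, a, rfl⟩, b, ⟨t, ht, htz, hbF⟩, rfl⟩
        refine ⟨Function.update (Function.update t y b) x a,
          ⟨Function.update t y b, ⟨t, ht, b, hbF, rfl⟩, a, rfl⟩, ?_⟩
        rw [updcomm]
        refine agree _ _ ?_ ?_ ?_
        · intro v hv
          rw [updz _ _ _ _ hv, updz _ _ _ _ hv]
          exact ((htz v hv).trans (Function.update_of_ne (hxz v hv) _ _)).symm
        · rw [updx, updx]
        · rw [updy, updy]
    · -- independence atom on Z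
      rintro w1 ⟨r1, ⟨s1, hs1, a1, rfl⟩, b1, ⟨t1, ht1, ht1z, hb1F⟩, rfl⟩
        w2 ⟨r2, ⟨s2, hs2, a2, rfl⟩, b2, ⟨t2, ht2, ht2z, hb2F⟩, rfl⟩ hz12
      have hs12 : ∀ v ∈ z, s1 v = s2 v := by
        intro v hv
        have := (lvz_iff _ _).1 hz12 v hv
        rwa [updz _ _ _ _ hv, updz _ _ _ _ hv] at this
      refine ⟨Function.update (Function.update s1 x a1) y b2,
        ⟨Function.update s1 x a1, ⟨s1, hs1, a1, rfl⟩, b2, ⟨t2, ht2, ?_, hb2F⟩, rfl⟩,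
        ?_, ?_, ?_⟩
      · intro v hv
        rw [Function.update_of_ne (hxz v hv)]
        exact (ht2z v hv).trans ((Function.update_of_ne (hxz v hv) _ _).trans (hs12 v hv).symm)
      · rw [listVal_single_var, listVal_single_var, updx, updx]
      · exact (lvz_iff _ _).2 fun v hv => by rw [updz _ _ _ _ hv, updz _ _ _ _ hv]
      · rw [listVal_single_var, listVal_single_var, updy, updy]
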